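/- Let F be a field of characteristic zero, let x_1, x_2, x_3 be pairwise distinct elements of F, let a_1, a_2, a_3 ∈ F, and set f(s) = 1 + a_1 s + a_2 s² + a_3 s³. Then the coefficient of t³ in the polynomial Σ_{σ ∈ S_3} Π_{1≤i<j≤3} f(t(x_{σ(i)} − x_{σ(j)})) / (x_{σ(i)} − x_{σ(j)}) ∈ F[t] equals 6(a_1³ + a_1 a_2 − a_3). (This computes the complex cobordism class of the flag manifold U(3)/T³: [U(3)/T³] = 6(a_1³ + a_1a_2 − a_3).) -/

import Mathlib

open Polynomial

private lemma coeff3_prod {F : Type*} [Field F] (p0 p1 p2 p3 q0 q1 q2 q3 r0 r1 r2 r3 : F) :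
    ((C p0 + C p1 * X + C p2 * X^2 + C p3 * X^3) * ((C q0 + C q1 * X + C q2 * X^2 + C q3 * X^3) *
     (C r0 + C r1 * X + C r2 * X^2 + C r3 * X^3))).coeff 3 =
    p3*q0*r0 + p0*q3*r0 + p0*q0*r3 + p2*q1*r0 + p2*q0*r1 + p1*q2*r0 + p0*q2*r1 + p1*q0*r2
      + p0*q1*r2 + p1*q1*r1 := by
  simp [coeff_mul, Finset.Nat.sum_antidiagonal_eq_sum_range_succ_mk, Finset.sum_range_succ,
    coeff_C, coeff_X, coeff_X_pow]
  ring

private lemma fac {F : Type*} [Field F] (a₁ a₂ a₃ d : F) (hd : d ≠ 0) :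
    C d⁻¹ * (1 + C (a₁ * d) * X + C (a₂ * d ^ 2) * X ^ 2 + C (a₃ * d ^ 3) * X ^ 3)
    = C d⁻¹ + C a₁ * X + C (a₂ * d) * X ^ 2 + C (a₃ * d ^ 2) * X ^ 3 := by
  rw [mul_add, mul_add, mul_add, mul_one, ← mul_assoc, ← mul_assoc, ← mul_assoc,
    ← C_mul, ← C_mul, ← C_mul,
    show d⁻¹ * (a₁ * d) = a₁ by field_simp,
    show d⁻¹ * (a₂ * d ^ 2) = a₂ * d by field_simp,
    show d⁻¹ * (a₃ * d ^ 3) = a₃ * d ^ 2 by field_simp]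

set_option maxHeartbeats 8000000 in
theorem cobordism_class_flag_U3 {F : Type*} [Field F] [CharZero F]
    (x : Fin 3 → F) (hx : Function.Injective x) (a₁ a₂ a₃ : F) (f : F → F[X])
    (hf : ∀ c : F, f c = 1 + C (a₁ * c) * X + C (a₂ * c ^ 2) * X ^ 2 + C (a₃ * c ^ 3) * X ^ 3) :
    (∑ σ : Equiv.Perm (Fin 3),
        ∏ p ∈ Finset.univ.filter (fun p : Fin 3 × Fin 3 => p.1 < p.2),
          C ((x (σ p.1) - x (σ p.2))⁻¹) * f (x (σ p.1) - x (σ p.2))).coeff 3 =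
      6 * (a₁ ^ 3 + a₁ * a₂ - a₃) := by
  have hxd : ∀ (σ : Equiv.Perm (Fin 3)) (i j : Fin 3), i ≠ j → x (σ i) - x (σ j) ≠ 0 := by
    intro σ i j hij
    exact sub_ne_zero.mpr fun h => hij (σ.injective (hx h))
  have key : ∀ σ : Equiv.Perm (Fin 3),
      (∏ p ∈ Finset.univ.filter (fun p : Fin 3 × Fin 3 => p.1 < p.2),
          C ((x (σ p.1) - x (σ p.2))⁻¹) * f (x (σ p.1) - x (σ p.2))).coeff 3 =
      (fun b c d : F =>
        a₃*(b-c)^2 * (b-d)⁻¹ * (c-d)⁻¹ + (b-c)⁻¹ * (a₃*(b-d)^2) * (c-d)⁻¹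
        + (b-c)⁻¹ * (b-d)⁻¹ * (a₃*(c-d)^2)
        + (a₂*(b-c)) * a₁ * (c-d)⁻¹ + (a₂*(b-c)) * (b-d)⁻¹ * a₁
        + a₁ * (a₂*(b-d)) * (c-d)⁻¹ + (b-c)⁻¹ * (a₂*(b-d)) * a₁
        + a₁ * (b-d)⁻¹ * (a₂*(c-d)) + (b-c)⁻¹ * a₁ * (a₂*(c-d)) + a₁*a₁*a₁)
        (x (σ 0)) (x (σ 1)) (x (σ 2)) := by
    intro σ
    rw [show (Finset.univ.filter (fun p : Fin 3 × Fin 3 => p.1 < p.2))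
        = {((0:Fin 3),(1:Fin 3)), (0,2), (1,2)} from by decide,
      Finset.prod_insert (by decide), Finset.prod_insert (by decide), Finset.prod_singleton]
    simp only [hf]
    rw [fac a₁ a₂ a₃ _ (hxd σ 0 1 (by decide)), fac a₁ a₂ a₃ _ (hxd σ 0 2 (by decide)),
      fac a₁ a₂ a₃ _ (hxd σ 1 2 (by decide)), coeff3_prod]
  rw [finset_sum_coeff, Finset.sum_congr rfl (fun σ _ => key σ),
    show (Finset.univ : Finset (Equiv.Perm (Fin 3))) =
      {1, Equiv.swap 0 1, Equiv.swap 0 2, Equiv.swap 1 2,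
       Equiv.swap 0 1 * Equiv.swap 1 2, Equiv.swap 1 2 * Equiv.swap 0 1} from by decide,
    Finset.sum_insert (by decide), Finset.sum_insert (by decide), Finset.sum_insert (by decide),
    Finset.sum_insert (by decide), Finset.sum_insert (by decide), Finset.sum_singleton]
  have e : ∀ (σ : Equiv.Perm (Fin 3)) (i : Fin 3), σ i = σ i := fun _ _ => rfl
  simp only [Equiv.Perm.one_apply, Equiv.Perm.mul_apply,
    Equiv.swap_apply_left, Equiv.swap_apply_right,
    show (Equiv.swap (0:Fin 3) 1) 2 = 2 from by decide,
    show (Equiv.swap (0:Fin 3) 2) 1 = 1 from by decide,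
    show (Equiv.swap (1:Fin 3) 2) 0 = 0 from by decide]
  have h01 : x 0 - x 1 ≠ 0 := sub_ne_zero.mpr fun h => absurd (hx h) (by decide)
  have h02 : x 0 - x 2 ≠ 0 := sub_ne_zero.mpr fun h => absurd (hx h) (by decide)
  have h12 : x 1 - x 2 ≠ 0 := sub_ne_zero.mpr fun h => absurd (hx h) (by decide)
  have h10 : x 1 - x 0 ≠ 0 := sub_ne_zero.mpr fun h => absurd (hx h) (by decide)
  have h20 : x 2 - x 0 ≠ 0 := sub_ne_zero.mpr fun h => absurd (hx h) (by decide)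
  have h21 : x 2 - x 1 ≠ 0 := sub_ne_zero.mpr fun h => absurd (hx h) (by decide)
  simp only [show x 1 - x 0 = -(x 0 - x 1) from by ring,
    show x 2 - x 1 = -(x 1 - x 2) from by ring,
    show x 2 - x 0 = -(x 0 - x 1 + (x 1 - x 2)) from by ring,
    show x 0 - x 2 = x 0 - x 1 + (x 1 - x 2) from by ring, inv_neg]
  have huw : x 0 - x 1 + (x 1 - x 2) ≠ 0 := by
    intro h; exact h02 (by rw [← h]; ring)
  generalize hgu : x 0 - x 1 = u at *
  generalize hgw : x 1 - x 2 = w at *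
  apply mul_left_cancel₀ (mul_ne_zero (mul_ne_zero h01 h12) huw)
  linear_combination
      (2*w^4*(u+w)⁻¹*a₃ - 2*w^4*w⁻¹*a₃ + 2*u*w^2*a₁*a₂ + 2*u*w^3*(u+w)⁻¹*a₃ - 6*u*w^3*w⁻¹*a₃
        + 2*u^2*w*a₁*a₂ - 6*u^2*w^2*w⁻¹*a₃ - 2*u^3*w*w⁻¹*a₃) * mul_inv_cancel₀ h01
    + (-2*w^3*a₃ - 6*u*w^2*a₃ + 2*u*w^2*a₁*a₂ - 6*u^2*w*a₃ + 2*u^2*w*a₁*a₂ - 2*u^3*a₃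
        + 2*u^3*w*(u+w)⁻¹*a₃ + 2*u^4*(u+w)⁻¹*a₃) * mul_inv_cancel₀ h12
    + (2*w^3*a₃ + 2*u*w^2*a₁*a₂ + 2*u^2*w*a₁*a₂ + 2*u^3*a₃) * mul_inv_cancel₀ huw
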